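/- Let D be a digraph, k ≥ 1 an integer, and W a nonempty subset of V(D) such that the induced subdigraph D[W] is k-arc-strong. If for every vertex v ∈ V(D) \ W there are at least k pairwise arc-disjoint directed paths from v to W and at least k pairwise arc-disjoint directed paths from W to v, then D is k-arc-strong. -/

import Mathlib

/-- The number of arcs of the digraph `D` leaving the vertex set `S`. -/
noncomputable def dicut {V : Type*} [Fintype V] (D : V → V → Prop) (S : Finset V) : ℕ :=
  Nat.card {p : V × V // p.1 ∈ S ∧ p.2 ∉ S ∧ D p.1 p.2}

/-- A digraph is `k`-arc-strong iff every dicut has size at least `k`. -/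
def ArcStrong {V : Type*} [Fintype V] (D : V → V → Prop) (k : ℕ) : Prop :=
  ∀ S : Finset V, S.Nonempty → S ≠ Finset.univ → k ≤ dicut D S

/-- The arcs traversed by the walk `l`, as a list of ordered pairs. -/
def arcsOf {V : Type*} (l : List V) : List (V × V) := l.zip l.tail

/-- There exist `m` pairwise arc-disjoint directed paths in `D`, each starting at a vertex
satisfying `src` and ending at a vertex satisfying `tgt`. -/
def HasArcDisjointPaths {V : Type*} (D : V → V → Prop) (m : ℕ) (src tgt : V → Prop) : Prop :=
  ∃ P : Fin m → List V,
    (∀ i, (P i).Nodup ∧ (P i).Chain' D ∧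
      (∃ s, (P i).head? = some s ∧ src s) ∧ (∃ t, (P i).getLast? = some t ∧ tgt t)) ∧
    ∀ i j, i ≠ j → ∀ a ∈ arcsOf (P i), a ∉ arcsOf (P j)

/-- If `D[W]` is `k`-arc-strong and every vertex outside `W` has `k` arc-disjoint paths to `W`
and `k` arc-disjoint paths from `W`, then `D` is `k`-arc-strong. -/
lemma crossing {V : Type*} (D : V → V → Prop) (S : Finset V) :
    ∀ l : List V, l.Chain' D → ∀ s, l.head? = some s → s ∈ S →
    ∀ t, l.getLast? = some t → t ∉ S →
    ∃ a ∈ arcsOf l, a.1 ∈ S ∧ a.2 ∉ S ∧ D a.1 a.2 := by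
  intro l
  induction l with
  | nil => simp
  | cons x rest ih =>
    intro hch s hs hsS t ht htS
    simp only [List.head?_cons, Option.some.injEq] at hs
    subst hs
    cases rest with
    | nil =>
      simp only [List.getLast?_singleton, Option.some.injEq] at ht
      subst ht; exact absurd hsS htS
    | cons y t' =>
      rw [List.Chain', List.isChain_cons_cons] at hch
      by_cases hy : y ∈ S
      · obtain ⟨a, ha, hprop⟩ := ih hch.2 y rfl hy t
          (by simpa using ht) htS
        exact ⟨a, by simp [arcsOf] at ha ⊢; right; exact ha, hprop⟩
      · exact ⟨(x, y), by simp [arcsOf], hsS, hy, hch.1⟩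

lemma cut_lb {V : Type*} [Fintype V] (D : V → V → Prop) (S : Finset V)
    {k : ℕ} {src tgt : V → Prop} (h : HasArcDisjointPaths D k src tgt)
    (hsrc : ∀ v, src v → v ∈ S) (htgt : ∀ v, tgt v → v ∉ S) :
    k ≤ dicut D S := by
  obtain ⟨P, hP, hdisj⟩ := h
  have key : ∀ i : Fin k, ∃ a ∈ arcsOf (P i), a.1 ∈ S ∧ a.2 ∉ S ∧ D a.1 a.2 := by
    intro i
    obtain ⟨_, hch, ⟨s, hs, hss⟩, ⟨t, ht, htt⟩⟩ := hP i
    exact crossing D S (P i) hch s hs (hsrc s hss) t ht (htgt t htt)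
  choose a ha hp1 hp2 hp3 using key
  have hinj : Function.Injective
      (fun i : Fin k => (⟨a i, hp1 i, hp2 i, hp3 i⟩ :
        {p : V × V // p.1 ∈ S ∧ p.2 ∉ S ∧ D p.1 p.2})) := by
    intro i j hij
    by_contra hne
    have : a i = a j := congrArg Subtype.val hij
    exact hdisj i j hne (a i) (ha i) (this ▸ ha j)
  calc k = Nat.card (Fin k) := by simp
    _ ≤ _ := Nat.card_le_card_of_injective _ hinj

theorem stmt_1 {V : Type*} [Fintype V] [DecidableEq V] (D : V → V → Prop) (k : ℕ)
    (hk : 1 ≤ k) (W : Finset V) (hW : W.Nonempty)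
    (hWstrong : ∀ S : Finset V, S ⊆ W → S.Nonempty → S ≠ W →
      k ≤ Nat.card {p : V × V // p.1 ∈ S ∧ p.2 ∈ W \ S ∧ D p.1 p.2})
    (hpaths : ∀ v, v ∉ W →
      HasArcDisjointPaths D k (· = v) (· ∈ W) ∧ HasArcDisjointPaths D k (· ∈ W) (· = v)) :
    ArcStrong D k := by
  intro S hS hSuniv
  by_cases hWS : W ⊆ S
  · -- some vertex v ∉ S, hence v ∉ W; use paths W → v
    obtain ⟨v, hv⟩ : ∃ v, v ∉ S := by
      by_contra h
      push_neg at h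
      exact hSuniv (Finset.eq_univ_iff_forall.mpr h)
    have hvW : v ∉ W := fun h => hv (hWS h)
    exact cut_lb D S (hpaths v hvW).2 (fun w hw => hWS hw) (fun w hw => hw ▸ hv)
  · by_cases hSW : (S ∩ W).Nonempty
    · -- interior cut: use hWstrong with S ∩ W
      have h1 : S ∩ W ⊆ W := Finset.inter_subset_right
      have h2 : S ∩ W ≠ W := by
        intro h
        exact hWS (fun w hw => (Finset.inter_subset_left) (h ▸ hw))
      have := hWstrong (S ∩ W) h1 hSW h2
      refine this.trans (Nat.card_le_card_of_injective
        (fun p : {p : V × V // p.1 ∈ S ∩ W ∧ p.2 ∈ W \ (S ∩ W) ∧ D p.1 p.2} =>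
          (⟨p.1, (Finset.mem_inter.mp p.2.1).1,
            fun hpS => (Finset.mem_sdiff.mp p.2.2.1).2
              (Finset.mem_inter.mpr ⟨hpS, (Finset.mem_sdiff.mp p.2.2.1).1⟩),
            p.2.2.2⟩ : {p : V × V // p.1 ∈ S ∧ p.2 ∉ S ∧ D p.1 p.2}))
        (fun p q h => Subtype.ext (by simpa using h)))
    · -- S disjoint from W; pick v ∈ S, v ∉ W, use paths v → W
      obtain ⟨v, hv⟩ := hS
      have hvW : v ∉ W := fun h => hSW ⟨v, Finset.mem_inter.mpr ⟨hv, h⟩⟩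
      refine cut_lb D S (hpaths v hvW).1 (fun w hw => hw ▸ hv) (fun w hw hwS => ?_)
      exact hSW ⟨w, Finset.mem_inter.mpr ⟨hwS, hw⟩⟩
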